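/- Null geodesics of the extreme Reissner–Nordström metric confined to a sphere of constant radius r = Q (i.e. curves γ(τ) = (t(τ), Q, π/2, φ(τ)) with t, φ affine in τ, satisfying the geodesic equation and g(γ', γ') = 0) exist only for Q = 2M, and then (dt/dτ)²·D(Q) = Q² (dφ/dτ)² with the relation D'(Q) (dt/dτ)² = 2Q (dφ/dτ)² forcing Q = 2M. -/

import Mathlib

/-- Orbiting null geodesics at constant radius Q exist only at the photon sphere
Q = 2M: the r-geodesic equation D'(Q) (dt)² = 2Q (dφ)² together with the null
condition D(Q) (dt)² = Q² (dφ)² force Q = 2M. -/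
theorem null_geodesic_constant_radius (M Q dt dφ : ℝ) (hM : 0 < M) (hQ : M < Q)
    (hdφ : dφ ≠ 0) (D : ℝ → ℝ) (hD : ∀ r, D r = (1 - M / r) ^ 2)
    (hgeo : deriv D Q * dt ^ 2 = 2 * Q * dφ ^ 2)
    (hnull : D Q * dt ^ 2 = Q ^ 2 * dφ ^ 2) :
    Q = 2 * M := by
  have hQpos : 0 < Q := hM.trans hQ
  have hQ0 : Q ≠ 0 := ne_of_gt hQpos
  have hDfun : D = fun r => (1 - M / r) ^ 2 := funext hD
  have hder : HasDerivAt D (2 * (1 - M / Q) * (M / Q ^ 2)) Q := by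
    rw [hDfun]
    have h1 : HasDerivAt (fun r : ℝ => 1 - M / r) (M / Q ^ 2) Q := by
      have := ((hasDerivAt_inv hQ0).const_mul M).const_sub 1
      have heq : (fun r : ℝ => 1 - M * r⁻¹) = fun r : ℝ => 1 - M / r := by
        funext r; rw [div_eq_mul_inv]
      rw [heq] at this
      refine this.congr_deriv ?_
      ring
    have := h1.pow 2
    refine this.congr_deriv ?_
    push_cast
    ring
  rw [hder.deriv] at hgeo
  rw [hD] at hnull
  -- dt ≠ 0
  have hdφ2 : (0:ℝ) < dφ ^ 2 := by positivity
  have hdt : dt ≠ 0 := by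
    intro h
    rw [h] at hnull
    have : 0 < Q ^ 2 * dφ ^ 2 := by positivity
    nlinarith
  have hu : 1 - M / Q = (Q - M) / Q := by field_simp
  have h1 : 2 * ((Q - M) / Q) * (M / Q ^ 2) * dt ^ 2 = 2 * Q * dφ ^ 2 := by
    rw [← hu]; exact hgeo
  have h2 : ((Q - M) / Q) ^ 2 * dt ^ 2 = Q ^ 2 * dφ ^ 2 := by
    rw [← hu]; exact hnull
  have hQM : Q - M > 0 := by linarith
  have hdt2 : (0:ℝ) < dt ^ 2 := by positivity
  field_simp at h1 h2
  nlinarith [h1, h2, mul_pos hQM hdt2, mul_pos hQpos hdt2]
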